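/- Let v ∈ (0,1) and let T(X,Y,x) := (√((1−v²)(X−x)² + Y²) − vY)/(1−v²). Let p_i = (X_i,Y_i) and p_j = (X_j,Y_j) be distinct points with Y_j ≥ Y_i ≥ 0. Then the set {x ∈ ℝ : T(X_i,Y_i,x) ≤ T(X_j,Y_j,x)} is convex (i.e., it is an interval, possibly empty or unbounded). In particular, the pairwise dominance region of the lower vehicle p_i with respect to p_j is the intersection of [0,W] with an interval. -/

import Mathlib

open Real MeasureTheory Filter

lemma key_ineq (a p q u w : ℝ) (ha : 0 < a) (hp : 0 ≤ p) (hq : 0 < q)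
    (h : q * u ≤ p * w) :
    u * Real.sqrt (a * w ^ 2 + q ^ 2) ≤ w * Real.sqrt (a * u ^ 2 + p ^ 2) := by
  set d1 := Real.sqrt (a * u ^ 2 + p ^ 2) with hd1
  set d2 := Real.sqrt (a * w ^ 2 + q ^ 2) with hd2
  have h1 : (0:ℝ) ≤ a * u ^ 2 + p ^ 2 := by positivity
  have h2 : (0:ℝ) ≤ a * w ^ 2 + q ^ 2 := by positivity
  have hd1sq : d1 ^ 2 = a * u ^ 2 + p ^ 2 := Real.sq_sqrt h1
  have hd2sq : d2 ^ 2 = a * w ^ 2 + q ^ 2 := Real.sq_sqrt h2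
  have hd1n : 0 ≤ d1 := Real.sqrt_nonneg _
  have hd2n : 0 ≤ d2 := Real.sqrt_nonneg _
  rcases le_or_gt u 0 with hu | hu
  · rcases le_or_gt 0 w with hw | hw
    · have h3 : u * d2 ≤ 0 := mul_nonpos_of_nonpos_of_nonneg hu hd2n
      have h4 : 0 ≤ w * d1 := mul_nonneg hw hd1n
      linarith
    · have hpw : p * w ≤ 0 := mul_nonpos_of_nonneg_of_nonpos hp hw.le
      have hsq : (p*w)^2 ≤ (q*u)^2 := by nlinarith
      have hq2 : u^2 * q^2 ≥ w^2 * p^2 := by nlinarith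
      have hsq2 : (w*d1)^2 ≤ (u*d2)^2 := by nlinarith
      have h3 : u * d2 ≤ 0 := mul_nonpos_of_nonpos_of_nonneg hu hd2n
      have h4 : w * d1 ≤ 0 := mul_nonpos_of_nonpos_of_nonneg hw.le hd1n
      nlinarith
  · have hqu : 0 < q * u := mul_pos hq hu
    have hpw : 0 < p * w := lt_of_lt_of_le hqu h
    have hw : 0 < w := by
      rcases le_or_gt w 0 with h' | h'
      · exfalso; nlinarith
      · exact h'
    have hsq2 : (u*d2)^2 ≤ (w*d1)^2 := by nlinarith
    have h3 : 0 ≤ u * d2 := mul_nonneg hu.le hd2n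
    have h4 : 0 ≤ w * d1 := mul_nonneg hw.le hd1n
    nlinarith

lemma sqrt_hasDeriv (a X Y x : ℝ) (hpos : 0 < a * (X - x) ^ 2 + Y ^ 2) :
    HasDerivAt (fun t => Real.sqrt (a * (X - t) ^ 2 + Y ^ 2))
      (a * (x - X) / Real.sqrt (a * (X - x) ^ 2 + Y ^ 2)) x := by
  have hin : HasDerivAt (fun t => a * (X - t) ^ 2 + Y ^ 2) (2 * a * (x - X)) x := by
    have h1 : HasDerivAt (fun t : ℝ => X - t) (-1) x := (hasDerivAt_id x).const_sub X
    have h2 := (h1.fun_pow 2).const_mul a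
    have h3 := h2.add_const (Y ^ 2)
    exact h3.congr_deriv (by ring)
  have h4 := hin.sqrt hpos.ne'
  convert h4 using 1
  rw [div_eq_div_iff (by positivity) (by positivity)]
  ring

set_option maxHeartbeats 1000000 in
/-- For distinct vehicles with `Y_j ≥ Y_i ≥ 0`, the set
`{x : T(X_i,Y_i,x) ≤ T(X_j,Y_j,x)}` is convex; in particular, the pairwise dominance
region of the lower vehicle is the intersection of `[0,W]` with an interval. -/
theorem stmt_19 (v W : ℝ) (hv0 : 0 < v) (hv1 : v < 1) (hW : 0 < W)
    (T : ℝ → ℝ → ℝ → ℝ)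
    (hT : ∀ X Y x : ℝ, T X Y x =
      (Real.sqrt ((1 - v ^ 2) * (X - x) ^ 2 + Y ^ 2) - v * Y) / (1 - v ^ 2))
    (Xi Yi Xj Yj : ℝ) (hne : (Xi, Yi) ≠ (Xj, Yj)) (hYi : 0 ≤ Yi) (hYij : Yi ≤ Yj) :
    Convex ℝ {x : ℝ | T Xi Yi x ≤ T Xj Yj x} ∧
    Convex ℝ (Set.Icc (0:ℝ) W ∩ {x : ℝ | T Xi Yi x ≤ T Xj Yj x}) := by
  set a : ℝ := 1 - v ^ 2 with haa
  have ha : 0 < a := by nlinarith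
  set h : ℝ → ℝ := fun x =>
    Real.sqrt (a * (Xi - x) ^ 2 + Yi ^ 2) - Real.sqrt (a * (Xj - x) ^ 2 + Yj ^ 2) with hh
  have hset : {x : ℝ | T Xi Yi x ≤ T Xj Yj x} = {x : ℝ | h x ≤ v * (Yi - Yj)} := by
    ext x
    simp only [Set.mem_setOf_eq, hT, hh]
    rw [div_le_div_iff_of_pos_right ha]
    constructor <;> intro hx <;> linarith
  suffices hc : Convex ℝ {x : ℝ | T Xi Yi x ≤ T Xj Yj x} by
    exact ⟨hc, (convex_Icc 0 W).inter hc⟩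
  rw [hset]
  rcases eq_or_lt_of_le hYij with hYeq | hYlt
  · -- Case Yi = Yj : the condition is linear in x
    have hlin : ∀ x : ℝ, h x ≤ v * (Yi - Yj) ↔
        2 * (Xj - Xi) * x ≤ Xj ^ 2 - Xi ^ 2 := by
      intro x
      have hc0 : v * (Yi - Yj) = 0 := by rw [hYeq]; ring
      rw [hc0, hh]
      simp only [sub_nonpos]
      rw [Real.sqrt_le_sqrt_iff (by positivity)]
      rw [← hYeq]
      constructor <;> intro hx <;> nlinarith
    have hEq : {x : ℝ | h x ≤ v * (Yi - Yj)}
        = {x : ℝ | 2 * (Xj - Xi) * x ≤ Xj ^ 2 - Xi ^ 2} := by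
      ext x; exact hlin x
    rw [hEq]
    intro x hx y hy s t hs ht hst
    simp only [Set.mem_setOf_eq, smul_eq_mul] at *
    nlinarith [mul_le_mul_of_nonneg_left hx hs, mul_le_mul_of_nonneg_left hy ht]
  · -- Case Yi < Yj
    have hYj : 0 < Yj := lt_of_le_of_lt hYi hYlt
    set m : ℝ := (Yj * Xi - Yi * Xj) / (Yj - Yi) with hm
    have harg2 : ∀ x : ℝ, 0 < a * (Xj - x) ^ 2 + Yj ^ 2 := by
      intro x; positivity
    have harg1 : ∀ x : ℝ, x ≠ m → 0 < a * (Xi - x) ^ 2 + Yi ^ 2 := by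
      intro x hx
      rcases hYi.lt_or_eq with hYi' | hYi'
      · positivity
      · have hXm : m = Xi := by
          rw [hm, ← hYi']
          rw [zero_mul, sub_zero, sub_zero, mul_div_cancel_left₀ _ hYj.ne']
        have hxi : Xi - x ≠ 0 := by
          intro h0
          exact hx (by rw [hXm]; linarith [sub_eq_zero.mp h0])
        have h2 := pow_two_pos_of_ne_zero hxi
        nlinarith
    have hderiv : ∀ x : ℝ, x ≠ m →
        HasDerivAt h (a * (x - Xi) / Real.sqrt (a * (Xi - x) ^ 2 + Yi ^ 2)
          - a * (x - Xj) / Real.sqrt (a * (Xj - x) ^ 2 + Yj ^ 2)) x := by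
      intro x hx
      exact (sqrt_hasDeriv a Xi Yi x (harg1 x hx)).sub (sqrt_hasDeriv a Xj Yj x (harg2 x))
    have hcont : Continuous h := by
      apply Continuous.sub <;> apply Continuous.sqrt <;> fun_prop
    have hd1p : ∀ x : ℝ, x ≠ m → 0 < Real.sqrt (a * (Xi - x) ^ 2 + Yi ^ 2) :=
      fun x hx => Real.sqrt_pos.mpr (harg1 x hx)
    have hd2p : ∀ x : ℝ, 0 < Real.sqrt (a * (Xj - x) ^ 2 + Yj ^ 2) :=
      fun x => Real.sqrt_pos.mpr (harg2 x)
    -- antitone on Iic m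
    have hant : AntitoneOn h (Set.Iic m) := by
      apply antitoneOn_of_deriv_nonpos (convex_Iic m) hcont.continuousOn
      · rw [interior_Iic]
        intro x hx
        exact (hderiv x (ne_of_lt hx)).differentiableAt.differentiableWithinAt
      · rw [interior_Iic]
        intro x hx
        have hxm : x < m := hx
        rw [(hderiv x hxm.ne).deriv, sub_nonpos,
          div_le_div_iff₀ (hd1p x hxm.ne) (hd2p x)]
        have hqu : Yj * (x - Xi) ≤ Yi * (x - Xj) := by
          have hx' : x * (Yj - Yi) < Yj * Xi - Yi * Xj :=
            (lt_div_iff₀ (by linarith)).mp hxm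
          nlinarith
        have hk := key_ineq a Yi Yj (x - Xi) (x - Xj) ha hYi hYj hqu
        rw [show a * (x - Xj) ^ 2 + Yj ^ 2 = a * (Xj - x) ^ 2 + Yj ^ 2 from by ring,
          show a * (x - Xi) ^ 2 + Yi ^ 2 = a * (Xi - x) ^ 2 + Yi ^ 2 from by ring] at hk
        have := mul_le_mul_of_nonneg_left hk ha.le
        linarith [this]
    -- monotone on Ici m
    have hmono : MonotoneOn h (Set.Ici m) := by
      apply monotoneOn_of_deriv_nonneg (convex_Ici m) hcont.continuousOn
      · rw [interior_Ici]
        intro x hx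
        exact (hderiv x (ne_of_gt hx)).differentiableAt.differentiableWithinAt
      · rw [interior_Ici]
        intro x hx
        have hxm : m < x := hx
        rw [(hderiv x hxm.ne').deriv, sub_nonneg,
          div_le_div_iff₀ (hd2p x) (hd1p x hxm.ne')]
        have hqu : Yj * (Xi - x) ≤ Yi * (Xj - x) := by
          have hx' : Yj * Xi - Yi * Xj < x * (Yj - Yi) :=
            (div_lt_iff₀ (by linarith)).mp hxm
          nlinarith
        have hk := key_ineq a Yi Yj (Xi - x) (Xj - x) ha hYi hYj hqu
        have h5 := mul_le_mul_of_nonneg_left hk ha.le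
        linarith [h5]
    -- conclude convexity of the sublevel set via order-connectedness
    rw [convex_iff_ordConnected]
    constructor
    intro x hx y hy z hz
    simp only [Set.mem_setOf_eq] at hx hy ⊢
    rcases le_total z m with hzm | hzm
    · have h1 : h z ≤ h x :=
        hant (Set.mem_Iic.mpr (le_trans hz.1 hzm)) (Set.mem_Iic.mpr hzm) hz.1
      linarith
    · have h1 : h z ≤ h y :=
        hmono (Set.mem_Ici.mpr hzm) (Set.mem_Ici.mpr (le_trans hzm hz.2)) hz.2
      linarith
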